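/- Let Δ > 0 and σ > 0 with Gaussian Φ(r) = e^{-r²/σ²}. If σ > 2Δ/√e, then Δ·Φ'(r) > -1/√2 for all r ≥ 0. -/

import Mathlib

/-- One-landmark topology preservation for the Gaussian:
if σ > 2Δ/√e then Δ·Φ'(r) > -1/√2 for all r ≥ 0, where
Φ'(r) = -(2r/σ²)·exp(-r²/σ²). -/
theorem gaussian_topology (σ Δ : ℝ) (hσ : 0 < σ) (hΔ : 0 < Δ)
    (h : σ > 2 * Δ / Real.sqrt (Real.exp 1)) :
    ∀ r : ℝ, 0 ≤ r →
      Δ * (-(2*r/σ^2) * Real.exp (-r^2/σ^2)) > -(1 / Real.sqrt 2) := by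
  intro r hr
  rw [show -r^2/σ^2 = -(r^2/σ^2) by ring]
  have hs2 : Real.sqrt 2 * Real.sqrt 2 = 2 := Real.mul_self_sqrt (by norm_num)
  have hs2pos : (0:ℝ) < Real.sqrt 2 := Real.sqrt_pos.mpr (by norm_num)
  have hse : Real.sqrt (Real.exp 1) = Real.exp (1/2) := by
    rw [← Real.exp_half]
  have hsepos : (0:ℝ) < Real.exp (1/2) := Real.exp_pos _
  set x : ℝ := r^2/σ^2 with hxdef
  have hx0 : 0 ≤ x := by positivity
  have hEpos : 0 < Real.exp (-x) := Real.exp_pos _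
  have hExpos : 0 < Real.exp x := Real.exp_pos _
  have hEmul : Real.exp (-x) * Real.exp x = 1 := by
    rw [← Real.exp_add]; simp
  have h1 : Real.exp (1/2) * (x + 1/2) ≤ Real.exp x := by
    have hadd := Real.add_one_le_exp (x - 1/2)
    have hsub : Real.exp (x - 1/2) * Real.exp (1/2) = Real.exp x := by
      rw [← Real.exp_add]; ring_nf
    nlinarith [hsepos]
  have hxr : x * σ^2 = r^2 := by
    rw [hxdef]; field_simp
  have h2 : Real.sqrt 2 * r ≤ (x + 1/2) * σ := by
    nlinarith [sq_nonneg (Real.sqrt 2 * r - σ), sq_nonneg r, sq_nonneg σ]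
  have h3 : Real.sqrt 2 * Real.exp (1/2) * r ≤ σ * Real.exp x := by
    calc Real.sqrt 2 * Real.exp (1/2) * r = Real.exp (1/2) * (Real.sqrt 2 * r) := by ring
    _ ≤ Real.exp (1/2) * ((x + 1/2) * σ) := mul_le_mul_of_nonneg_left h2 hsepos.le
    _ = σ * (Real.exp (1/2) * (x + 1/2)) := by ring
    _ ≤ σ * Real.exp x := mul_le_mul_of_nonneg_left h1 hσ.le
  have h4 : Real.sqrt 2 * Real.exp (1/2) * (r * Real.exp (-x)) ≤ σ := by
    have hh := mul_le_mul_of_nonneg_right h3 hEpos.le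
    calc Real.sqrt 2 * Real.exp (1/2) * (r * Real.exp (-x))
        = Real.sqrt 2 * Real.exp (1/2) * r * Real.exp (-x) := by ring
    _ ≤ σ * Real.exp x * Real.exp (-x) := hh
    _ = σ := by rw [mul_assoc, mul_comm (Real.exp x), hEmul, mul_one]
  have h5 : 2 * Δ < σ * Real.exp (1/2) := by
    rw [hse, gt_iff_lt, div_lt_iff₀ hsepos] at h
    linarith
  have hσ2 : (0:ℝ) < σ^2 := by positivity
  have hgoal : Δ * (2*r/σ^2) * Real.exp (-x) < 1 / Real.sqrt 2 := by
    rw [lt_div_iff₀ hs2pos, show Δ * (2*r/σ^2) * Real.exp (-x) * Real.sqrt 2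
      = 2 * Δ * Real.sqrt 2 * (r * Real.exp (-x)) / σ^2 by ring, div_lt_iff₀ hσ2, one_mul]
    rcases eq_or_lt_of_le (by positivity : (0:ℝ) ≤ r * Real.exp (-x)) with hu | hu
    · rw [← hu]; nlinarith
    · calc 2 * Δ * Real.sqrt 2 * (r * Real.exp (-x))
          < σ * Real.exp (1/2) * Real.sqrt 2 * (r * Real.exp (-x)) := by
            nlinarith [mul_lt_mul_of_pos_right h5 (mul_pos hs2pos hu)]
      _ = σ * (Real.sqrt 2 * Real.exp (1/2) * (r * Real.exp (-x))) := by ring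
      _ ≤ σ * σ := mul_le_mul_of_nonneg_left h4 hσ.le
      _ = σ^2 := (sq σ).symm
  have heq : Δ * (-(2*r/σ^2) * Real.exp (-x)) = -(Δ * (2*r/σ^2) * Real.exp (-x)) := by ring
  rw [gt_iff_lt, heq]
  exact neg_lt_neg hgoal
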